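/- arXiv:2211.00380 — 3 statements merged into one kernel-verified Lean document; each statement's English description precedes it below -/
import Mathlib

section
/- In a 2-category with products of hom-categories modeled as Cat: a coequinserter can be constructed from a coinserter followed by a coequifier. Concretely in Cat: given functors h : A ⥤ B, f, g : B ⥤ C and a natural transformation γ : h ⋙ f ⟶ h ⋙ g, let (e : C ⥤ D, χ : f ⋙ e ⟶ g ⋙ e) be a coinserter of (f, g) and let q : D ⥤ Q be a coequifier of the two natural transformations whiskerLeft h χ and the transformation induced by γ and e, from h ⋙ f ⋙ e to h ⋙ g ⋙ e. Then (e ⋙ q, whiskerRight χ q) is a coequinserter of γ. -/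
open CategoryTheory

universe v u

variable {A : Type u} [Category.{v} A] {B : Type u} [Category.{v} B]
  {C : Type u} [Category.{v} C]

/-- `(e, χ)` is a coinserter of the parallel pair `(f, g)`:
universal 1-cell equipped with a 2-cell `f ⋙ e ⟶ g ⋙ e`, in both the 1-dimensional
and 2-dimensional sense. -/
def IsCoinserter (f g : B ⥤ C) {D : Type u} [Category.{v} D]
    (e : C ⥤ D) (χ : f ⋙ e ⟶ g ⋙ e) : Prop :=
  (∀ (R : Type u) [Category.{v} R] (u : C ⥤ R) (ε : f ⋙ u ⟶ g ⋙ u),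
    ∃! t : D ⥤ R, ∃ _ : e ⋙ t = u, HEq (Functor.whiskerRight χ t) ε) ∧
  (∀ (R : Type u) [Category.{v} R] (t t' : D ⥤ R) (θ : e ⋙ t ⟶ e ⋙ t'),
    Functor.whiskerRight χ t ≫ Functor.whiskerLeft g θ = Functor.whiskerLeft f θ ≫ Functor.whiskerRight χ t' →
      ∃! θ' : t ⟶ t', Functor.whiskerLeft e θ' = θ)

/-- `q` is a coequifier of the parallel 2-cells `σ, τ : u ⟶ v`. -/
def IsCoequifier {D : Type u} [Category.{v} D] {u v : B ⥤ D} (σ τ : u ⟶ v)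
    {Q : Type u} [Category.{v} Q] (q : D ⥤ Q) : Prop :=
  Functor.whiskerRight σ q = Functor.whiskerRight τ q ∧
  (∀ (R : Type u) [Category.{v} R] (w : D ⥤ R),
    Functor.whiskerRight σ w = Functor.whiskerRight τ w → ∃! t : Q ⥤ R, q ⋙ t = w) ∧
  (∀ (R : Type u) [Category.{v} R] (t t' : Q ⥤ R) (θ : q ⋙ t ⟶ q ⋙ t'),
    ∃! θ' : t ⟶ t', Functor.whiskerLeft q θ' = θ)

/-- `(i, φ)` is a coequinserter of the 2-cell `γ : h ⋙ f ⟶ h ⋙ g`. -/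
def IsCoequinserter (h : A ⥤ B) (f g : B ⥤ C) (γ : h ⋙ f ⟶ h ⋙ g)
    {Q : Type u} [Category.{v} Q] (i : C ⥤ Q) (φ : f ⋙ i ⟶ g ⋙ i) : Prop :=
  Functor.whiskerLeft h φ = Functor.whiskerRight γ i ∧
  (∀ (R : Type u) [Category.{v} R] (u : C ⥤ R) (ε : f ⋙ u ⟶ g ⋙ u),
    Functor.whiskerLeft h ε = Functor.whiskerRight γ u →
      ∃! t : Q ⥤ R, ∃ _ : i ⋙ t = u, HEq (Functor.whiskerRight φ t) ε) ∧
  (∀ (R : Type u) [Category.{v} R] (t t' : Q ⥤ R) (θ : i ⋙ t ⟶ i ⋙ t'),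
    Functor.whiskerRight φ t ≫ Functor.whiskerLeft g θ = Functor.whiskerLeft f θ ≫ Functor.whiskerRight φ t' →
      ∃! θ' : t ⟶ t', Functor.whiskerLeft i θ' = θ)

/-- A coequinserter can be constructed as a coinserter followed by a coequifier:
if `(e, χ)` is a coinserter of `(f, g)` and `q` is a coequifier of `Functor.whiskerLeft h χ`
and the 2-cell induced by `γ` and `e`, then `(e ⋙ q, Functor.whiskerRight χ q)` is a
coequinserter of `γ`. -/
theorem stmt_13 (h : A ⥤ B) (f g : B ⥤ C) (γ : h ⋙ f ⟶ h ⋙ g)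
    {D : Type u} [Category.{v} D] (e : C ⥤ D) (χ : f ⋙ e ⟶ g ⋙ e)
    (hcoins : IsCoinserter f g e χ)
    {Q : Type u} [Category.{v} Q] (q : D ⥤ Q)
    (hcoeq : IsCoequifier
      (u := h ⋙ (f ⋙ e)) (v := h ⋙ (g ⋙ e))
      (Functor.whiskerLeft h χ) (Functor.whiskerRight γ e) q) :
    IsCoequinserter h f g γ (e ⋙ q)
      ((Functor.whiskerRight χ q : (f ⋙ e) ⋙ q ⟶ (g ⋙ e) ⋙ q) :
        f ⋙ (e ⋙ q) ⟶ g ⋙ (e ⋙ q)) := by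

  obtain ⟨hins1, hins2⟩ := hcoins
  obtain ⟨hq0, hq1, hq2⟩ := hcoeq
  refine ⟨?_, ?_, ?_⟩
  · ext a
    have := NatTrans.congr_app hq0 a
    simpa using this
  · intro R _ u ε hε
    obtain ⟨t, ⟨ht, hheq⟩, htuniq⟩ := hins1 R u ε
    subst ht
    have hte : Functor.whiskerRight χ t = ε := eq_of_heq hheq
    subst hte
    have hw : Functor.whiskerRight (Functor.whiskerLeft h χ) t = Functor.whiskerRight (Functor.whiskerRight γ e) t := by
      ext a
      have := NatTrans.congr_app hε a
      simpa using this
    obtain ⟨s, hs, hsuniq⟩ := hq1 R t hw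
    subst hs
    refine ⟨s, ⟨rfl, HEq.rfl⟩, ?_⟩
    rintro s' ⟨hs', hheq'⟩
    refine hsuniq s' ?_
    refine htuniq (q ⋙ s') ⟨hs', hheq'⟩
  · intro R _ t t' θ hθ
    obtain ⟨θ₀, hθ₀, hθ₀u⟩ := hins2 R (q ⋙ t) (q ⋙ t') θ hθ
    obtain ⟨θ', hθ', hθ'u⟩ := hq2 R t t' θ₀
    refine ⟨θ', ?_, ?_⟩
    · show Functor.whiskerLeft e (Functor.whiskerLeft q θ') = θ
      rw [hθ']; exact hθ₀
    · intro θ'' hθ''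
      refine hθ'u θ'' (hθ₀u (Functor.whiskerLeft q θ'') hθ'')
end

section
/- Kancellation for units of a KZ situation in Cat: let t : S ⥤ TS and s : S ⥤ ST be functors, X a category, and f : S ⥤ X. Suppose the left Kan extension f/t exists with invertible unit, the left Kan extension t/s exists, and t/s is 'admissible' in the sense that Kan extensions along s out of objects Kan injective w.r.t. t compose. Then (f/t) ∘ (t/s) ≅ f/s, i.e. the composite of the two Kan extensions is a left Kan extension of f along s, provided f/t preserves the left Kan extension (t/s, ξ_t). -/
open CategoryTheory

/-- Kancellation: if `(ft, ζ)` is a left Kan extension of `f` along `t` with `ζ`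
invertible, `(ts, ξ)` is a left Kan extension of `t` along `s`, and `ft` preserves the
latter Kan extension, then `(ts ⋙ ft, ζ ≫ whiskerRight ξ ft)` is a left Kan extension
of `f` along `s`. -/
theorem stmt_15 {S TS ST X : Type*} [Category S] [Category TS] [Category ST] [Category X]
    (t : S ⥤ TS) (s : S ⥤ ST) (f : S ⥤ X)
    (ft : TS ⥤ X) (ζ : f ⟶ t ⋙ ft) [ft.IsLeftKanExtension ζ] (hζ : IsIso ζ)
    (ts : ST ⥤ TS) (ξ : t ⟶ s ⋙ ts) [ts.IsLeftKanExtension ξ]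
    (hpres : (ts ⋙ ft).IsLeftKanExtension
      ((Functor.whiskerRight ξ ft : t ⋙ ft ⟶ (s ⋙ ts) ⋙ ft) : t ⋙ ft ⟶ s ⋙ (ts ⋙ ft))) :
    (ts ⋙ ft).IsLeftKanExtension
      ((ζ ≫ Functor.whiskerRight ξ ft : f ⟶ (s ⋙ ts) ⋙ ft) : f ⟶ s ⋙ (ts ⋙ ft)) := by
  rw [Functor.isLeftKanExtension_iff_of_iso₂
    (F₁' := ts ⋙ ft) (F₂' := ts ⋙ ft)
    (ζ ≫ Functor.whiskerRight ξ ft : f ⟶ s ⋙ (ts ⋙ ft))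
    ((Functor.whiskerRight ξ ft : t ⋙ ft ⟶ (s ⋙ ts) ⋙ ft) : t ⋙ ft ⟶ s ⋙ (ts ⋙ ft))
    (asIso ζ) (Iso.refl _) (by aesop_cat)]
  exact hpres
end

section
/- Closure of Kan injective 1-cells under lalis: let h be a functor, and suppose f : A ⥤ B is left Kan injective with respect to h (both A, B are Kan injective and f preserves the Kan extensions along h). Given lalis l₁ : A ⥤ X and l₂ : B ⥤ Y (left adjoints with invertible counits, right adjoints r₁, r₂) and a natural isomorphism l₂ ∘ f ≅ g ∘ l₁ for some g : X ⥤ Y, then g is left Kan injective with respect to h: X and Y are Kan injective w.r.t. h and g preserves left Kan extensions along h. -/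
open CategoryTheory

section Hidden
open CategoryTheory.Limits


section Transpose

variable {E H₁ H₂ : Type*} [Category E] [Category H₁] [Category H₂]
  {l : H₁ ⥤ H₂} {r : H₂ ⥤ H₁} (adj : l ⊣ r)

/-- Transpose a natural transformation `P ⋙ l ⟶ Q` to `P ⟶ Q ⋙ r`. -/
@[simps]
def transposeUp {P : E ⥤ H₁} {Q : E ⥤ H₂} (τ : P ⋙ l ⟶ Q) : P ⟶ Q ⋙ r where
  app e := adj.unit.app _ ≫ r.map (τ.app e)
  naturality e e' u := by
    have hτ := τ.naturality u
    dsimp at hτ ⊢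
    rw [← adj.unit_naturality_assoc, ← r.map_comp, hτ, r.map_comp, Category.assoc]

/-- Transpose a natural transformation `P ⟶ Q ⋙ r` to `P ⋙ l ⟶ Q`. -/
@[simps]
def transposeDown {P : E ⥤ H₁} {Q : E ⥤ H₂} (σ : P ⟶ Q ⋙ r) : P ⋙ l ⟶ Q where
  app e := l.map (σ.app e) ≫ adj.counit.app _
  naturality e e' u := by
    have hσ := σ.naturality u
    dsimp at hσ ⊢
    rw [← l.map_comp_assoc, hσ, l.map_comp, Category.assoc, Category.assoc,
      adj.counit_naturality]

lemma transposeDown_transposeUp {P : E ⥤ H₁} {Q : E ⥤ H₂} (τ : P ⋙ l ⟶ Q) :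
    transposeDown adj (transposeUp adj τ) = τ := by
  ext e
  simp

end Transpose

/-- Left adjoints preserve left Kan extensions. -/
lemma lke_postcomp_adj {C D H₁ H₂ : Type*} [Category C] [Category D] [Category H₁] [Category H₂]
    {L : C ⥤ D} {F : C ⥤ H₁} (T : D ⥤ H₁) (α : F ⟶ L ⋙ T)
    [T.IsLeftKanExtension α] {l : H₁ ⥤ H₂} {r : H₂ ⥤ H₁} (adj : l ⊣ r) :
    (T ⋙ l).IsLeftKanExtension (Functor.whiskerRight α l ≫ (Functor.associator L T l).hom) := by
  constructor
  refine ⟨IsInitial.ofUniqueHom (fun Z => ?_) (fun Z m => ?_)⟩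
  · -- existence of the descent morphism
    let β' : F ⟶ L ⋙ (Z.right ⋙ r) := transposeUp adj (Z.hom : F ⋙ l ⟶ L ⋙ Z.right)
    let ψ : T ⟶ Z.right ⋙ r := T.descOfIsLeftKanExtension α _ β'
    refine StructuredArrow.homMk (transposeDown adj ψ) ?_
    ext c
    have fac := T.descOfIsLeftKanExtension_fac_app α _ β' c
    dsimp [ψ, β', Functor.LeftExtension.mk, transposeDown_app] at fac ⊢
    erw [transposeDown_app]
    erw [transposeUp_app] at fac
    rw [Category.comp_id, ← l.map_comp_assoc, fac, l.map_comp, Category.assoc,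
      adj.counit_naturality, adj.left_triangle_components_assoc]
  · -- uniqueness
    have w := StructuredArrow.w m
    let β' : F ⟶ L ⋙ (Z.right ⋙ r) := transposeUp adj (Z.hom : F ⋙ l ⟶ L ⋙ Z.right)
    have key : transposeUp adj (m.right : T ⋙ l ⟶ Z.right) =
        T.descOfIsLeftKanExtension α _ β' := by
      apply T.hom_ext_of_isLeftKanExtension α
      rw [T.descOfIsLeftKanExtension_fac α]
      ext c
      have wc := NatTrans.congr_app w c
      dsimp [Functor.LeftExtension.mk, transposeUp_app] at wc ⊢
      rw [Category.comp_id] at wc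
      erw [transposeUp_app]
      rw [← adj.unit_naturality_assoc, ← r.map_comp, wc]
      simp [β']
    apply StructuredArrow.hom_ext
    have h2 := transposeDown_transposeUp adj (m.right : T ⋙ l ⟶ Z.right)
    rw [← h2, key]
    rfl

/-- The codomain of a lali is Kan injective if its domain is. -/
lemma kanInj_of_lali {Cc Cc' A X : Type*} [Category Cc] [Category Cc'] [Category A] [Category X]
    (h : Cc ⥤ Cc')
    (hA : ∀ t : Cc ⥤ A, ∃ (T : Cc' ⥤ A) (α : t ⟶ h ⋙ T), T.IsLeftKanExtension α ∧ IsIso α)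
    (l : A ⥤ X) (r : X ⥤ A) (adj : l ⊣ r) (hc : IsIso adj.counit) :
    ∀ t : Cc ⥤ X, ∃ (T : Cc' ⥤ X) (α : t ⟶ h ⋙ T), T.IsLeftKanExtension α ∧ IsIso α := by
  intro t
  obtain ⟨T, α, hT, hα⟩ := hA (t ⋙ r)
  haveI := hT; haveI := hα; haveI := hc
  let α₁ : (t ⋙ r) ⋙ l ⟶ h ⋙ (T ⋙ l) := Functor.whiskerRight α l ≫ (Functor.associator h T l).hom
  haveI : (T ⋙ l).IsLeftKanExtension α₁ := lke_postcomp_adj T α adj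
  let e : (t ⋙ r) ⋙ l ≅ t :=
    Functor.associator t r l ≪≫ Functor.isoWhiskerLeft t (asIso adj.counit) ≪≫ t.rightUnitor
  refine ⟨T ⋙ l, e.inv ≫ α₁, ?_, ?_⟩
  · exact (Functor.isLeftKanExtension_iff_of_iso₂ α₁ (e.inv ≫ α₁) e (Iso.refl _)
      (by simp)).1 inferInstance
  · haveI : IsIso (Functor.whiskerRight α l) := inferInstance
    haveI : IsIso α₁ := by dsimp [α₁]; infer_instance
    infer_instance


end Hidden

/-- Closure of Kan injective 1-cells under lalis: if `f : A ⥤ B` is left Kan injective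
with respect to `h` (its domain and codomain are Kan injective and it preserves Kan
extensions along `h`), `l₁ : A ⥤ X`, `l₂ : B ⥤ Y` are lalis with right adjoints
`r₁`, `r₂`, and `f ⋙ l₂ ≅ l₁ ⋙ g`, then `g : X ⥤ Y` is left Kan injective with
respect to `h`. -/
theorem stmt_16 {Cc Cc' A B X Y : Type*}
    [Category Cc] [Category Cc'] [Category A] [Category B] [Category X] [Category Y]
    (h : Cc ⥤ Cc') (f : A ⥤ B) (g : X ⥤ Y)
    (hA : ∀ t : Cc ⥤ A, ∃ (T : Cc' ⥤ A) (α : t ⟶ h ⋙ T),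
      T.IsLeftKanExtension α ∧ IsIso α)
    (hB : ∀ t : Cc ⥤ B, ∃ (T : Cc' ⥤ B) (α : t ⟶ h ⋙ T),
      T.IsLeftKanExtension α ∧ IsIso α)
    (hf : ∀ (t : Cc ⥤ A) (T : Cc' ⥤ A) (α : t ⟶ h ⋙ T),
      T.IsLeftKanExtension α →
        (T ⋙ f).IsLeftKanExtension
          (Functor.whiskerRight α f ≫ (Functor.associator h T f).hom))
    (l₁ : A ⥤ X) (r₁ : X ⥤ A) (adj₁ : l₁ ⊣ r₁) (hc₁ : IsIso adj₁.counit)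
    (l₂ : B ⥤ Y) (r₂ : Y ⥤ B) (adj₂ : l₂ ⊣ r₂) (hc₂ : IsIso adj₂.counit)
    (sq : f ⋙ l₂ ≅ l₁ ⋙ g) :
    (∀ t : Cc ⥤ X, ∃ (T : Cc' ⥤ X) (α : t ⟶ h ⋙ T),
      T.IsLeftKanExtension α ∧ IsIso α) ∧
    (∀ t : Cc ⥤ Y, ∃ (T : Cc' ⥤ Y) (α : t ⟶ h ⋙ T),
      T.IsLeftKanExtension α ∧ IsIso α) ∧
    (∀ (t : Cc ⥤ X) (T : Cc' ⥤ X) (α : t ⟶ h ⋙ T),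
      T.IsLeftKanExtension α →
        (T ⋙ g).IsLeftKanExtension
          (Functor.whiskerRight α g ≫ (Functor.associator h T g).hom)) := by
  haveI := hc₁; haveI := hc₂
  refine ⟨kanInj_of_lali h hA l₁ r₁ adj₁ hc₁, kanInj_of_lali h hB l₂ r₂ adj₂ hc₂, ?_⟩
  intro t T α hT
  haveI := hT
  -- the Kan extension of `t ⋙ r₁` in `A`
  obtain ⟨S, β, hS, hβ⟩ := hA (t ⋙ r₁)
  haveI := hS; haveI := hβ
  -- `S ⋙ f` is a left Kan extension
  haveI := hf _ S β hS
  -- `(S ⋙ f) ⋙ l₂` is a left Kan extension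
  let δ₀ : (t ⋙ r₁) ⋙ f ⟶ h ⋙ (S ⋙ f) := Functor.whiskerRight β f ≫ (Functor.associator h S f).hom
  let δ : ((t ⋙ r₁) ⋙ f) ⋙ l₂ ⟶ h ⋙ ((S ⋙ f) ⋙ l₂) :=
    Functor.whiskerRight δ₀ l₂ ≫ (Functor.associator h (S ⋙ f) l₂).hom
  haveI : ((S ⋙ f) ⋙ l₂).IsLeftKanExtension δ := lke_postcomp_adj (S ⋙ f) δ₀ adj₂
  -- `S ⋙ l₁` is a left Kan extension of `t`
  let α₁ : (t ⋙ r₁) ⋙ l₁ ⟶ h ⋙ (S ⋙ l₁) := Functor.whiskerRight β l₁ ≫ (Functor.associator h S l₁).hom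
  haveI : (S ⋙ l₁).IsLeftKanExtension α₁ := lke_postcomp_adj S β adj₁
  let eX : (t ⋙ r₁) ⋙ l₁ ≅ t :=
    Functor.associator t r₁ l₁ ≪≫ Functor.isoWhiskerLeft t (asIso adj₁.counit) ≪≫ t.rightUnitor
  let αS : t ⟶ h ⋙ (S ⋙ l₁) := eX.inv ≫ α₁
  haveI : (S ⋙ l₁).IsLeftKanExtension αS :=
    (Functor.isLeftKanExtension_iff_of_iso₂ α₁ αS eX (Iso.refl _) (by simp [αS])).1 inferInstance
  -- the comparison isomorphism between the two Kan extensions of `t`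
  let iT : (S ⋙ l₁) ≅ T := Functor.leftKanExtensionUnique (S ⋙ l₁) αS T α
  have iT_fac : αS ≫ Functor.whiskerLeft h iT.hom = α := by
    dsimp only [iT, Functor.leftKanExtensionUnique, Functor.leftKanExtensionUniqueOfIso]
    rw [Functor.descOfIsLeftKanExtension_fac]
    simp
  -- the isomorphism of the source diagrams
  let e : ((t ⋙ r₁) ⋙ f) ⋙ l₂ ≅ t ⋙ g :=
    NatIso.ofComponents
      (fun c => sq.app (r₁.obj (t.obj c)) ≪≫ g.mapIso (asIso (adj₁.counit.app (t.obj c))))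
      (by
        intro c c' u
        have := sq.hom.naturality (r₁.map (t.map u))
        dsimp at this ⊢
        rw [← Category.assoc, this, Category.assoc, ← g.map_comp,
          adj₁.counit_naturality, g.map_comp]
        simp)
  -- the isomorphism of the extensions
  let e' : (S ⋙ f) ⋙ l₂ ≅ T ⋙ g :=
    Functor.associator S f l₂ ≪≫ Functor.isoWhiskerLeft S sq ≪≫ (Functor.associator S l₁ g).symm
      ≪≫ Functor.isoWhiskerRight iT g
  refine (Functor.isLeftKanExtension_iff_of_iso₂ δ
    (Functor.whiskerRight α g ≫ (Functor.associator h T g).hom) e e' ?_).1 inferInstance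
  ext c
  have hcomp : l₁.map (β.app c) ≫ iT.hom.app (h.obj c)
      = adj₁.counit.app (t.obj c) ≫ α.app c := by
    have := NatTrans.congr_app iT_fac c
    dsimp [αS, α₁, eX] at this
    rw [Category.comp_id, Category.id_comp, Category.comp_id] at this
    rw [← this]
    simp
  have hnat := sq.hom.naturality (β.app c)
  dsimp [δ, δ₀, e, e'] at hnat ⊢
  rw [Category.comp_id, Category.comp_id, Category.id_comp, Category.id_comp,
    Category.comp_id]
  rw [← Category.assoc, hnat, Category.assoc, ← g.map_comp, hcomp]
  simp
end
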